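/- Let G be a finite non-nilpotent group such that the index of the Fitting subgroup Fit(G) in G is a prime p. If Γ(G) is connected, then the diameter of Γ(G) is at most 3. -/

import Mathlib

/-- The nilpotent neighborhood of `x`: elements `y` such that `⟨x,y⟩` is nilpotent. -/
def nilNbhd {G : Type*} [Group G] (x : G) : Set G :=
  {y | Group.IsNilpotent ↥(Subgroup.closure ({x, y} : Set G))}

/-- The hypercenter of a finite group: the stable term of the upper central series. -/
noncomputable def hypercenter (G : Type*) [Group G] : Subgroup G :=
  upperCentralSeries G (Nat.card G)

instance hypercenter_normal (G : Type*) [Group G] : (hypercenter G).Normal :=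
  (inferInstance : (Subgroup.upperCentralSeries G (Nat.card G)).Normal)

/-- The graph Γ(G): induced subgraph of the nilpotent graph on `G \ Z_∞(G)`. -/
def nilGraph (G : Type*) [Group G] : SimpleGraph {x : G // x ∉ hypercenter G} where
  Adj a b := a ≠ b ∧ Group.IsNilpotent ↥(Subgroup.closure ({a.1, b.1} : Set G))
  symm := ⟨fun a b ⟨h1, h2⟩ => ⟨h1.symm, by rwa [Set.pair_comm]⟩⟩
  loopless := ⟨fun a h => h.1 rfl⟩

/-- The commuting graph on the non-central elements. -/
def commGraph (G : Type*) [Group G] : SimpleGraph {x : G // x ∉ Subgroup.center G} where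
  Adj a b := a ≠ b ∧ a.1 * b.1 = b.1 * a.1
  symm := ⟨fun a b ⟨h1, h2⟩ => ⟨h1.symm, h2.symm⟩⟩
  loopless := ⟨fun a h => h.1 rfl⟩

/-- Diameter of a connected component: diameter of the induced subgraph on its support. -/
noncomputable def compDiam {V : Type*} (Γ : SimpleGraph V) (c : Γ.ConnectedComponent) : ℕ :=
  (Γ.induce c.supp).diam

/-- `H` is a Frobenius complement in `G`. -/
def IsFrobeniusComplement {G : Type*} [Group G] (H : Subgroup G) : Prop :=
  H ≠ ⊥ ∧ H ≠ ⊤ ∧ ∀ g : G, g ∉ H → H ⊓ H.map (MulAut.conj g).toMonoidHom = ⊥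

/-- `G` is a Frobenius group. -/
def IsFrobenius (G : Type*) [Group G] : Prop :=
  ∃ H : Subgroup G, IsFrobeniusComplement H

/-- `K` is the Frobenius kernel corresponding to the complement `H`. -/
def IsFrobeniusKernelOf {G : Type*} [Group G] (K H : Subgroup G) : Prop :=
  IsFrobeniusComplement H ∧
    (K : Set G) = {1} ∪ {x : G | ∀ g : G, x ∉ H.map (MulAut.conj g).toMonoidHom}

/-- `K` is a Frobenius kernel of `G`. -/
def IsFrobeniusKernel {G : Type*} [Group G] (K : Subgroup G) : Prop :=
  ∃ H : Subgroup G, IsFrobeniusKernelOf K H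

/-- `G` is a 2-Frobenius group. -/
def IsTwoFrobenius (G : Type*) [Group G] : Prop :=
  ∃ K L : Subgroup G, ∃ hK : K.Normal, L.Normal ∧ K ≤ L ∧
    IsFrobeniusKernel (K.subgroupOf L) ∧
    (haveI := hK; IsFrobeniusKernel (Subgroup.map (QuotientGroup.mk' K) L))

/-- The Fitting subgroup: the largest normal nilpotent subgroup (of a finite group). -/
def fitting (G : Type*) [Group G] : Subgroup G :=
  sSup {H : Subgroup G | H.Normal ∧ Group.IsNilpotent ↥H}

section AuxProof
open Subgroup
variable {G : Type*} [Group G]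

/-- A subgroup of a nilpotent group (given as bigger subgroup) is nilpotent. -/
theorem nilpotent_of_le {H K : Subgroup G} (h : H ≤ K) (hK : Group.IsNilpotent ↥K) :
    Group.IsNilpotent ↥H := by
  letI := hK
  exact nilpotent_of_mulEquiv (subgroupOfEquivOfLe h)

theorem mem_ucs_of_mem (H : Subgroup G) :
    ∀ (i : ℕ) (x : G) (hx : x ∈ H), x ∈ Subgroup.upperCentralSeries G i →
      (⟨x, hx⟩ : ↥H) ∈ Subgroup.upperCentralSeries ↥H i := by
  intro i
  induction i with
  | zero => intro x hx h; simpa [Subgroup.mem_bot, Subtype.ext_iff] using h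
  | succ n ih =>
    intro x hx h
    rw [Subgroup.mem_upperCentralSeries_succ_iff] at h ⊢
    intro y
    exact ih _ (H.mul_mem (H.mul_mem (H.mul_mem hx y.2) (H.inv_mem hx)) (H.inv_mem y.2))
      (h y.1)

theorem isNilpotent_hypercenter [Finite G] : Group.IsNilpotent ↥(hypercenter G) := by
  refine ⟨Nat.card G, ?_⟩
  rw [eq_top_iff]
  rintro ⟨x, hx⟩ _
  exact mem_ucs_of_mem _ _ x hx hx

/-- If the kernel-like normal subgroup sits inside a term of the upper central series and
the quotient is nilpotent, the group is nilpotent. -/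
theorem isNilpotent_of_ker_le_ucs {H : Type*} [Group H] (N : Subgroup H) [N.Normal] (n : ℕ)
    (hN : N ≤ Subgroup.upperCentralSeries H n) (hQ : Group.IsNilpotent (H ⧸ N)) :
    Group.IsNilpotent H := by
  obtain ⟨m, hm⟩ := hQ
  have key : ∀ k, (Subgroup.upperCentralSeries (H ⧸ N) k).comap (QuotientGroup.mk' N) ≤
      Subgroup.upperCentralSeries H (n + k) := by
    intro k
    induction k with
    | zero =>
      intro x hx
      simp only [Subgroup.upperCentralSeries_zero, Subgroup.mem_comap, Subgroup.mem_bot] at hx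
      exact hN ((QuotientGroup.eq_one_iff x).mp hx)
    | succ k ih =>
      intro x hx
      simp only [Subgroup.mem_comap] at hx
      rw [Subgroup.mem_upperCentralSeries_succ_iff] at hx
      rw [show n + (k+1) = (n + k) + 1 by ring, Subgroup.mem_upperCentralSeries_succ_iff]
      intro y
      apply ih
      have := hx ((QuotientGroup.mk' N) y)
      simpa only [Subgroup.mem_comap, map_mul, map_inv, map_commutatorElement] using this
  refine ⟨n + m, ?_⟩
  rw [eq_top_iff]
  intro x _
  exact key m (by simp [hm])

/-- Sup of a nilpotent subgroup with the hypercenter is nilpotent. -/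
theorem isNilpotent_sup_hypercenter [Finite G] (K : Subgroup G)
    (hK : Group.IsNilpotent ↥K) : Group.IsNilpotent ↥(K ⊔ hypercenter G) := by
  set Z := hypercenter G with hZ
  set M := K ⊔ Z with hM
  let f : ↥M →* G ⧸ Z := (QuotientGroup.mk' Z).comp M.subtype
  have hker : f.ker = Z.subgroupOf M := by
    ext x
    simp [f, MonoidHom.mem_ker, Subgroup.mem_subgroupOf, QuotientGroup.eq_one_iff]
  have hrange : f.range = K.map (QuotientGroup.mk' Z) := by
    rw [MonoidHom.range_comp, Subgroup.range_subtype, hM, Subgroup.map_sup]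
    have : Z.map (QuotientGroup.mk' Z) = ⊥ := by
      rw [Subgroup.map_eq_bot_iff, QuotientGroup.ker_mk']
    rw [this, sup_bot_eq]
  have hrng : Group.IsNilpotent ↥(K.map (QuotientGroup.mk' Z)) := by
    letI := hK
    exact nilpotent_of_surjective ((QuotientGroup.mk' Z).subgroupMap K)
      ((QuotientGroup.mk' Z).subgroupMap_surjective K)
  have hq : Group.IsNilpotent (↥M ⧸ f.ker) := by
    letI : Group.IsNilpotent ↥f.range := by rw [hrange]; exact hrng
    exact nilpotent_of_mulEquiv (QuotientGroup.quotientKerEquivRange f).symm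
  refine isNilpotent_of_ker_le_ucs f.ker (Nat.card G) ?_ hq
  rintro ⟨x, hxM⟩ hx
  rw [hker] at hx
  exact mem_ucs_of_mem M (Nat.card G) x hxM hx

theorem ucs_stab {k : ℕ}
    (h : Subgroup.upperCentralSeries G (k + 1) = Subgroup.upperCentralSeries G k) :
    ∀ d, Subgroup.upperCentralSeries G (k + d + 1) = Subgroup.upperCentralSeries G (k + d) := by
  intro d
  induction d with
  | zero => exact h
  | succ d ih =>
    apply le_antisymm
    · intro x hx
      rw [show k + (d+1) + 1 = (k + d + 1) + 1 by ring, Subgroup.mem_upperCentralSeries_succ_iff] at hx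
      rw [show k + (d+1) = (k + d) + 1 by ring, Subgroup.mem_upperCentralSeries_succ_iff]
      intro y
      rw [← ih]
      exact hx y
    · exact Subgroup.upperCentralSeries_mono G (by omega)

theorem hypercenter_succ [Finite G] :
    Subgroup.upperCentralSeries G (Nat.card G + 1) = Subgroup.upperCentralSeries G (Nat.card G) := by
  set N := Nat.card G with hN
  by_cases hex : ∃ k < N + 1, Subgroup.upperCentralSeries G (k + 1) = Subgroup.upperCentralSeries G k
  · obtain ⟨k, hk, heq⟩ := hex
    have := ucs_stab heq (N - k)
    rwa [show k + (N - k) = N by omega] at this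
  · push_neg at hex
    exfalso
    have hcard : ∀ k, k ≤ N + 1 → k ≤ Nat.card ↥(Subgroup.upperCentralSeries G k) := by
      intro k
      induction k with
      | zero => intro _; exact Nat.zero_le _
      | succ k ih =>
        intro hk
        have hle : Subgroup.upperCentralSeries G k ≤ Subgroup.upperCentralSeries G (k + 1) :=
          Subgroup.upperCentralSeries_mono G (Nat.le_succ k)
        have hne := hex k (by omega)
        have hlt : Nat.card ↥(Subgroup.upperCentralSeries G k) < Nat.card ↥(Subgroup.upperCentralSeries G (k+1)) := by
          refine lt_of_le_of_ne (Subgroup.card_le_of_le hle) (fun he => hne ?_)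
          exact (Subgroup.eq_of_le_of_card_ge hle (le_of_eq he.symm)).symm
        have := ih (by omega)
        omega
    have h1 := hcard (N + 1) le_rfl
    have h2 : Nat.card ↥(Subgroup.upperCentralSeries G (N + 1)) ≤ N := by
      rw [hN]
      exact Subgroup.card_le_card_group _
    omega


/-- In a nontrivial nilpotent group the center is nontrivial. -/
theorem center_ne_bot_of_nilpotent {H : Type*} [Group H] [Nontrivial H]
    (hH : Group.IsNilpotent H) : Subgroup.center H ≠ ⊥ := by
  intro hbot
  have key : ∀ n, Subgroup.upperCentralSeries H n = ⊥ := by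
    intro n
    induction n with
    | zero => simp
    | succ n ih =>
      rw [eq_bot_iff]
      intro x hx
      rw [Subgroup.mem_upperCentralSeries_succ_iff] at hx
      have hx' : x ∈ Subgroup.center H := by
        rw [Subgroup.mem_center_iff]
        intro g
        have := hx g
        rw [ih, Subgroup.mem_bot] at this
        have h1 : x * g * x⁻¹ = g := by rwa [commutatorElement_def, mul_inv_eq_one] at this
        calc g * x = (x * g * x⁻¹) * x := by rw [h1]
          _ = x * g := by group
      rw [hbot] at hx'
      exact hx'
  obtain ⟨m, hm⟩ := hH
  rw [key m] at hm
  exact bot_ne_top hm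

/-- Elements of coprime order in a finite nilpotent group commute. -/
theorem commute_of_coprime_orderOf (H : Type u) [Fintype H] :
    ∀ [Group H], Group.IsNilpotent H → ∀ {a b : H}, Nat.Coprime (orderOf a) (orderOf b) →
    Commute a b := by
  apply @Fintype.induction_subsingleton_or_nontrivial
    (fun α _ => ∀ [Group α], Group.IsNilpotent α → ∀ {a b : α},
      Nat.Coprime (orderOf a) (orderOf b) → Commute a b) H
  · intro α _ _ _ _ a b _
    exact Subsingleton.elim (a * b) (b * a)
  · intro α _ _ ih _ hnil a b hco
    have hcenter : Subgroup.center α ≠ ⊥ := center_ne_bot_of_nilpotent hnil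
    haveI : Fintype (α ⧸ Subgroup.center α) := Fintype.ofFinite _
    have hcq : Fintype.card (α ⧸ Subgroup.center α) < Fintype.card α := by
      simp only [← Nat.card_eq_fintype_card]
      rw [Subgroup.card_eq_card_quotient_mul_card_subgroup (Subgroup.center α)]
      apply lt_mul_of_one_lt_right
      · exact Nat.pos_of_ne_zero (by simp [Nat.card_eq_fintype_card, Fintype.card_ne_zero])
      · exact (Subgroup.one_lt_card_iff_ne_bot _).mpr hcenter
    have hqnil : Group.IsNilpotent (α ⧸ Subgroup.center α) :=
      nilpotent_of_surjective (QuotientGroup.mk' _) (QuotientGroup.mk'_surjective _)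
    have hcomm : Commute ((QuotientGroup.mk' (Subgroup.center α)) a)
        ((QuotientGroup.mk' (Subgroup.center α)) b) := by
      apply ih _ hcq hqnil
      exact Nat.Coprime.coprime_dvd_left (orderOf_map_dvd _ a)
        (Nat.Coprime.coprime_dvd_right (orderOf_map_dvd _ b) hco)
    set c := a * b * a⁻¹ * b⁻¹ with hc
    have hcen : c ∈ Subgroup.center α := by
      have h1 : (QuotientGroup.mk' (Subgroup.center α)) c = 1 := by
        rw [hc]
        simp only [map_mul, map_inv]
        rw [hcomm.eq]
        group
      exact (QuotientGroup.eq_one_iff c).mp h1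
    have claim : ∀ (x y d : α), d = x * y * x⁻¹ * y⁻¹ → d ∈ Subgroup.center α →
        ∀ n : ℕ, x * y ^ n * x⁻¹ = d ^ n * y ^ n := by
      intro x y d hd hdc n
      have hmc : ∀ g : α, d * g = g * d := fun g =>
        ((Subgroup.mem_center_iff.mp hdc) g).symm
      induction n with
      | zero => group
      | succ n ihn =>
        have e1 : x * y ^ (n + 1) * x⁻¹ = (x * y ^ n * x⁻¹) * (x * y * x⁻¹) := by
          rw [pow_succ]; group
        have e2 : x * y * x⁻¹ = d * y := by rw [hd]; group
        rw [e1, ihn, e2]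
        calc d ^ n * y ^ n * (d * y) = d ^ n * (y ^ n * d) * y := by group
          _ = d ^ n * (d * y ^ n) * y := by rw [hmc (y ^ n)]
          _ = d ^ (n + 1) * y ^ (n + 1) := by rw [pow_succ, pow_succ]; group
    have hdvd1 : orderOf c ∣ orderOf b := by
      apply orderOf_dvd_of_pow_eq_one
      have h2 := claim a b c hc hcen (orderOf b)
      rw [pow_orderOf_eq_one] at h2
      simpa using h2.symm
    have hdvd2 : orderOf c ∣ orderOf a := by
      have hcen2 : c⁻¹ ∈ Subgroup.center α := Subgroup.inv_mem _ hcen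
      have hinv : c⁻¹ = b * a * b⁻¹ * a⁻¹ := by rw [hc]; group
      have h2 := claim b a c⁻¹ hinv hcen2 (orderOf a)
      rw [pow_orderOf_eq_one] at h2
      have h3 : (1 : α) = (c⁻¹) ^ orderOf a := by simpa using h2.symm
      have h5 : orderOf c⁻¹ ∣ orderOf a := orderOf_dvd_of_pow_eq_one h3.symm
      rwa [orderOf_inv] at h5
    have hco1 : orderOf c = 1 := Nat.eq_one_of_dvd_coprimes hco hdvd2 hdvd1
    have hc1 : c = 1 := orderOf_eq_one_iff.mp hco1
    have h7 : a * b * a⁻¹ = b := by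
      rw [hc] at hc1
      rwa [mul_inv_eq_one] at hc1
    show a * b = b * a
    calc a * b = (a * b * a⁻¹) * a := by group
      _ = b * a := by rw [h7]

/-- The subgroup generated by two commuting elements is nilpotent. -/
theorem isNilpotent_closure_pair {a b : G} (h : Commute a b) :
    Group.IsNilpotent ↥(Subgroup.closure ({a, b} : Set G)) := by
  set K := Subgroup.closure ({a, b} : Set G) with hK
  have h1 : K ≤ Subgroup.centralizer ({a, b} : Set G) := by
    rw [hK, Subgroup.closure_le]
    intro x hx
    rw [SetLike.mem_coe, Subgroup.mem_centralizer_iff]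
    intro g hg
    rcases hx with rfl | rfl <;> rcases hg with rfl | rfl
    · rfl
    · exact h.symm.eq
    · exact h.eq
    · rfl
  have h2 : K ≤ Subgroup.centralizer (K : Set G) := by
    conv_lhs => rw [hK]
    rw [Subgroup.closure_le]
    intro x hx
    rw [SetLike.mem_coe, Subgroup.mem_centralizer_iff]
    intro g hg
    exact (Subgroup.mem_centralizer_iff.mp (h1 hg) x hx).symm
  letI : CommGroup ↥K :=
    { mul_comm := fun x y => by
        apply Subtype.ext
        push_cast
        exact Subgroup.mem_centralizer_iff.mp (h2 y.2) x.1 x.2 }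
  exact CommGroup.isNilpotent

/-- In a finite nilpotent group, any element of `p`-power order lies in every Sylow
`p`-subgroup. -/
theorem mem_sylow_of_nilpotent {H : Type*} [Group H] [Finite H] (hH : Group.IsNilpotent H)
    {p : ℕ} [Fact p.Prime] (Q : Sylow p H) {a : H} (ha : ∃ k, orderOf a = p ^ k) :
    a ∈ Q := by
  obtain ⟨k, hk⟩ := ha
  have hpg : IsPGroup p ↥(Subgroup.zpowers a) :=
    IsPGroup.of_card (by rw [Nat.card_zpowers, hk])
  obtain ⟨Q', hQ'⟩ := hpg.exists_le_sylow
  have hnormal : ∀ (P : Sylow p H), (↑P : Subgroup H).Normal := by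
    have h4 := ((isNilpotent_of_finite_tfae (G := H)).out 0 3).mp hH
    exact fun P => h4 p ‹_› P
  obtain ⟨g, hg⟩ := MulAction.exists_smul_eq H Q' Q
  haveI := hnormal Q'
  rw [Sylow.smul_eq_of_normal] at hg
  rw [← hg]
  exact hQ' (Subgroup.mem_zpowers a)

section PPart

variable (p : ℕ)

/-- The set of `p`-elements of a subgroup. -/
def pElts (N : Subgroup G) : Set G := {x | x ∈ N ∧ ∃ k, orderOf x = p ^ k}

/-- The subgroup generated by the `p`-elements of a subgroup. -/
def pPart (N : Subgroup G) : Subgroup G := Subgroup.closure (pElts p N)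

theorem pPart_le (N : Subgroup G) : pPart p N ≤ N :=
  (Subgroup.closure_le N).mpr (fun _ hx => hx.1)

theorem mem_pPart_of_pElt {N : Subgroup G} {x : G} (hx : x ∈ N) (hord : ∃ k, orderOf x = p ^ k) :
    x ∈ pPart p N := Subgroup.subset_closure ⟨hx, hord⟩

theorem orderOf_conj' (g x : G) : orderOf (g * x * g⁻¹) = orderOf x := by
  have h := orderOf_injective (MulAut.conj g).toMonoidHom (MulAut.conj g).injective x
  simpa [MulAut.conj_apply] using h

theorem pPart_normal (N : Subgroup G) (hN : N.Normal) : (pPart p N).Normal := by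
  constructor
  intro n hn g
  induction hn using Subgroup.closure_induction with
  | mem x hx => exact Subgroup.subset_closure ⟨hN.conj_mem x hx.1 g, by rw [orderOf_conj' g x]; exact hx.2⟩
  | one => simpa using Subgroup.one_mem _
  | mul x y hx hy ihx ihy =>
    have : g * (x * y) * g⁻¹ = (g * x * g⁻¹) * (g * y * g⁻¹) := by group
    rw [this]; exact Subgroup.mul_mem _ ihx ihy
  | inv x hx ihx =>
    have : g * x⁻¹ * g⁻¹ = (g * x * g⁻¹)⁻¹ := by group
    rw [this]; exact Subgroup.inv_mem _ ihx

theorem orderOf_subtype {H : Type*} [Group H] {N : Subgroup H} (x : ↥N) :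
    orderOf (x : H) = orderOf x :=
  orderOf_injective N.subtype (Subgroup.subtype_injective N) x

theorem orderOf_eq_pow_of_pGroup {H : Type*} [Group H] [Finite H] {p : ℕ} (hp : p.Prime)
    {K : Subgroup H} (hK : IsPGroup p ↥K) {y : H} (hy : y ∈ K) : ∃ j, orderOf y = p ^ j := by
  obtain ⟨k, hk⟩ := hK ⟨y, hy⟩
  have h1 : orderOf (⟨y, hy⟩ : ↥K) ∣ p ^ k := orderOf_dvd_of_pow_eq_one hk
  rw [← orderOf_subtype (⟨y, hy⟩ : ↥K)] at h1
  obtain ⟨j, _, hj⟩ := (Nat.dvd_prime_pow hp).mp h1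
  exact ⟨j, hj⟩

theorem sylow_map_le_pPart {N : Subgroup G} [Finite G] [Fact p.Prime] (Q : Sylow p ↥N) :
    (↑Q : Subgroup ↥N).map N.subtype ≤ pPart p N := by
  rintro x ⟨y, hy, rfl⟩
  have h1 : ∃ j, orderOf (y : G) = p ^ j := by
    obtain ⟨j, hj⟩ := orderOf_eq_pow_of_pGroup (Fact.out : p.Prime) Q.isPGroup' hy
    exact ⟨j, by rw [orderOf_subtype, hj]⟩
  exact mem_pPart_of_pElt p y.2 h1

theorem pPart_isPGroup [Finite G] {N : Subgroup G} [Fact p.Prime]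
    (hN : Group.IsNilpotent ↥N) : IsPGroup p ↥(pPart p N) := by
  obtain ⟨Q⟩ := (Sylow.nonempty : Nonempty (Sylow p ↥N))
  have hle : pPart p N ≤ (↑Q : Subgroup ↥N).map N.subtype := by
    apply (Subgroup.closure_le _).mpr
    intro x hx
    obtain ⟨hxN, k, hk⟩ := hx
    have : (⟨x, hxN⟩ : ↥N) ∈ Q := by
      apply mem_sylow_of_nilpotent hN
      exact ⟨k, by rw [← orderOf_subtype (⟨x, hxN⟩ : ↥N)]; exact hk⟩
    exact ⟨⟨x, hxN⟩, this, rfl⟩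
  have hQG : IsPGroup p ↥((↑Q : Subgroup ↥N).map N.subtype) :=
    Q.isPGroup'.of_equiv (Subgroup.equivMapOfInjective _ _ (Subgroup.subtype_injective N))
  exact hQG.to_le hle

end PPart

theorem pPart_relindex_not_dvd [Finite G] {p : ℕ} [Fact p.Prime] {N : Subgroup G}
    (hN : Group.IsNilpotent ↥N) : ¬ p ∣ (pPart p N).relIndex N := by
  obtain ⟨Q⟩ := (Sylow.nonempty : Nonempty (Sylow p ↥N))
  have h1 : (↑Q : Subgroup ↥N) ≤ (pPart p N).subgroupOf N := by
    have := sylow_map_le_pPart p Q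
    intro x hx
    exact Subgroup.mem_subgroupOf.mpr (this ⟨x, hx, rfl⟩)
  have h2 : IsPGroup p ↥((pPart p N).subgroupOf N) :=
    ((pPart_isPGroup p hN).of_equiv (subgroupOfEquivOfLe (pPart_le p N)).symm)
  have h3 : (pPart p N).subgroupOf N = ↑Q := Q.3 h2 h1
  have : (pPart p N).relIndex N = (↑Q : Subgroup ↥N).index := by
    rw [Subgroup.relIndex, h3]
  rw [this]
  exact Sylow.not_dvd_index' Q (Subgroup.index_ne_zero_of_finite)

/-- Key counting lemma: the relative index of a normal subgroup `X` in `S ⊔ X`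
divides the relative index of any `T ≤ X ⊓ S` in `S`. -/
theorem relindex_sup_dvd {S X T : Subgroup G} [Finite G] (hXn : X.Normal)
    (hTX : T ≤ X) (hTS : T ≤ S) : X.relIndex (S ⊔ X) ∣ T.relIndex S := by
  haveI := hXn
  set J := S ⊔ X with hJ
  haveI : (X.subgroupOf J).Normal := Subgroup.normal_subgroupOf
  let φ : ↥S →* ↥J ⧸ X.subgroupOf J :=
    (QuotientGroup.mk' (X.subgroupOf J)).comp (Subgroup.inclusion le_sup_left)
  have hsurj : Function.Surjective φ := by
    intro q
    induction q using QuotientGroup.induction_on with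
    | H j =>
      have hj : (j : G) ∈ (↑(S ⊔ X) : Set G) := j.2
      rw [Subgroup.mul_normal S X] at hj
      obtain ⟨s, hs, x, hx, hsx⟩ := hj
      refine ⟨⟨s, hs⟩, ?_⟩
      show QuotientGroup.mk _ = QuotientGroup.mk j
      rw [QuotientGroup.eq, Subgroup.mem_subgroupOf]
      show (((Subgroup.inclusion (le_sup_left : S ≤ J)) ⟨s, hs⟩)⁻¹ * j : G) ∈ X
      have he : (((Subgroup.inclusion (le_sup_left : S ≤ J)) ⟨s, hs⟩)⁻¹ * j : G)
          = s⁻¹ * (j : G) := rfl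
      rw [he, ← hsx, inv_mul_cancel_left]
      exact hx
  have hker : T.subgroupOf S ≤ φ.ker := by
    intro t ht
    rw [MonoidHom.mem_ker]
    show QuotientGroup.mk _ = 1
    rw [QuotientGroup.eq_one_iff, Subgroup.mem_subgroupOf]
    exact hTX (Subgroup.mem_subgroupOf.mp ht)
  have hcard : X.relIndex J = φ.ker.index := by
    rw [Subgroup.relIndex, Subgroup.index_eq_card, Subgroup.index_eq_card]
    exact (Nat.card_congr (QuotientGroup.quotientKerEquivOfSurjective φ hsurj).toEquiv).symm
  rw [hcard, Subgroup.relIndex]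
  exact Subgroup.index_dvd_of_le hker

/-- Fitting's theorem: the sup of two normal nilpotent subgroups is nilpotent. -/
theorem isNilpotent_sup_of_normal [Finite G] {N M : Subgroup G}
    (hNn : N.Normal) (hMn : M.Normal)
    (hN : Group.IsNilpotent ↥N) (hM : Group.IsNilpotent ↥M) :
    Group.IsNilpotent ↥(N ⊔ M) := by
  set J := N ⊔ M with hJdef
  apply ((isNilpotent_of_finite_tfae (G := ↥J)).out 3 0).mp
  intro p hp P
  haveI := hp
  set Pn := pPart p N with hPn
  set Pm := pPart p M with hPm
  set R := Pn ⊔ Pm with hR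
  haveI hPnn : Pn.Normal := pPart_normal p N hNn
  haveI hPmn : Pm.Normal := pPart_normal p M hMn
  haveI hRn : R.Normal := Subgroup.sup_normal Pn Pm
  have hRp : IsPGroup p ↥R :=
    IsPGroup.to_sup_of_normal_right (pPart_isPGroup p hN) (pPart_isPGroup p hM)
  have hRJ : R ≤ J := sup_le ((pPart_le p N).trans le_sup_left)
    ((pPart_le p M).trans le_sup_right)
  set R' := R.subgroupOf J with hR'
  haveI hR'n : R'.Normal := Subgroup.normal_subgroupOf
  have hR'p : IsPGroup p ↥R' := hRp.of_equiv (subgroupOfEquivOfLe hRJ).symm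
  -- counting
  set B := Pn ⊔ M with hB
  have hRB : R ≤ B := sup_le le_sup_left ((pPart_le p M).trans le_sup_right)
  have hBJ : B ≤ J := sup_le ((pPart_le p N).trans le_sup_left) le_sup_right
  have hdvd1 : B.relIndex J ∣ (pPart p N).relIndex N := by
    have h1 : N ⊔ B = J := by
      rw [hB, hJdef, ← sup_assoc, sup_of_le_left (pPart_le p N)]
    haveI : B.Normal := Subgroup.sup_normal Pn M
    have := relindex_sup_dvd (S := N) (X := B) (T := Pn) ‹B.Normal›
      (le_sup_left) (pPart_le p N)
    rwa [h1] at this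
  have hdvd2 : R.relIndex B ∣ (pPart p M).relIndex M := by
    have h1 : M ⊔ R = B := by
      rw [hR, hB, sup_comm Pn Pm, ← sup_assoc, sup_of_le_left (pPart_le p M), sup_comm]
    have := relindex_sup_dvd (S := M) (X := R) (T := Pm) hRn
      (le_sup_right) (pPart_le p M)
    rwa [h1] at this
  have hmul : R.relIndex B * B.relIndex J = R.relIndex J :=
    Subgroup.relIndex_mul_relIndex R B J hRB hBJ
  have hnd : ¬ p ∣ R.relIndex J := by
    rw [← hmul]
    intro hdvd
    rcases (Nat.Prime.dvd_mul Fact.out).mp hdvd with h | h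
    · exact pPart_relindex_not_dvd hM (h.trans hdvd2)
    · exact pPart_relindex_not_dvd hN (h.trans hdvd1)
  -- Sylow P is contained in R'
  have hPle : (↑P : Subgroup ↥J) ≤ R' := by
    intro g hg
    have h1 : ∃ j, orderOf g = p ^ j :=
      orderOf_eq_pow_of_pGroup (Fact.out : p.Prime) P.isPGroup' hg
    obtain ⟨j, hj⟩ := h1
    have h2 : orderOf ((QuotientGroup.mk' R') g) ∣ p ^ j := by
      rw [← hj]; exact orderOf_map_dvd _ g
    have h3 : orderOf ((QuotientGroup.mk' R') g) ∣ R'.index := by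
      rw [Subgroup.index_eq_card]
      exact orderOf_dvd_natCard _
    have h4 : R'.index = R.relIndex J := rfl
    rw [h4] at h3
    have h5 : orderOf ((QuotientGroup.mk' R') g) = 1 := by
      refine Nat.eq_one_of_dvd_coprimes (a := p ^ j) (b := R.relIndex J) ?_ h2 h3
      exact Nat.Coprime.pow_left j ((Nat.Prime.coprime_iff_not_dvd Fact.out).mpr hnd)
    have h6 : (QuotientGroup.mk' R') g = 1 := orderOf_eq_one_iff.mp h5
    exact (QuotientGroup.eq_one_iff g).mp h6
  have : R' = ↑P := P.3 hR'p hPle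
  rw [← this]
  exact hR'n

theorem fitting_spec [Finite G] : (fitting G).Normal ∧ Group.IsNilpotent ↥(fitting G) := by
  classical
  set S := {H : Subgroup G | H.Normal ∧ Group.IsNilpotent ↥H} with hS
  have hfin : S.Finite := Set.toFinite _
  have claim : ∀ t : Finset (Subgroup G), (↑t : Set (Subgroup G)) ⊆ S → t.sup id ∈ S := by
    intro t
    induction t using Finset.induction_on with
    | empty =>
      intro _
      simp only [Finset.sup_empty]
      constructor
      · infer_instance
      · exact ⟨0, Subsingleton.elim _ _⟩
    | insert a s hmem ih =>
      intro hsub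
      rw [Finset.sup_insert]
      have ha : a ∈ S := hsub (Finset.mem_insert_self a s)
      have hs : (↑s : Set (Subgroup G)) ⊆ S := fun x hx => hsub (Finset.mem_insert_of_mem hx)
      have hss := ih hs
      refine ⟨?_, ?_⟩
      · haveI := ha.1; haveI := hss.1
        exact Subgroup.sup_normal a (s.sup id)
      · exact isNilpotent_sup_of_normal ha.1 hss.1 ha.2 hss.2
  have heq : fitting G = hfin.toFinset.sup id := by
    apply le_antisymm
    · apply sSup_le
      intro H hH
      exact Finset.le_sup (f := id) (hfin.mem_toFinset.mpr hH)
    · apply Finset.sup_le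
      intro H hH
      exact le_sSup (hfin.mem_toFinset.mp hH)
  rw [heq]
  exact claim _ (fun H hH => hfin.mem_toFinset.mp hH)

/-- Decomposition of an element into commuting p-part and p'-part inside ⟨x⟩. -/
theorem exists_p_decomp [Finite G] (p : ℕ) (hp : p.Prime) (x : G) :
    ∃ u v : G, u ∈ Subgroup.zpowers x ∧ v ∈ Subgroup.zpowers x ∧ x = u * v ∧
      (∃ k, orderOf u = p ^ k) ∧ ¬ p ∣ orderOf v := by
  set n := orderOf x with hn
  have hn0 : n ≠ 0 := (orderOf_pos x).ne'
  set a := n.factorization p with ha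
  set pa := p ^ a with hpa
  set m := n / pa with hm
  have hmul : pa * m = n := Nat.ordProj_mul_ordCompl_eq_self n p
  have hm0 : m ≠ 0 := (Nat.ordCompl_pos p hn0).ne'
  have hpm : ¬ p ∣ m := Nat.not_dvd_ordCompl hp hn0
  have cp : Nat.Coprime pa m := Nat.Coprime.pow_left a ((Nat.Prime.coprime_iff_not_dvd hp).mpr hpm)
  set t := pa.totient with htdef
  set s := m.totient with hsdef
  have hpa0 : 0 < pa := pow_pos hp.pos a
  have ht : 0 < t := Nat.totient_pos.mpr hpa0
  have hs : 0 < s := Nat.totient_pos.mpr (Nat.pos_of_ne_zero hm0)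
  refine ⟨x ^ (m ^ t), x ^ (pa ^ s), Subgroup.pow_mem _ (Subgroup.mem_zpowers x) _,
    Subgroup.pow_mem _ (Subgroup.mem_zpowers x) _, ?_, ?_, ?_⟩
  · -- x = u * v
    rw [← pow_add]
    have hmod : m ^ t + pa ^ s ≡ 1 [MOD n] := by
      rw [← hmul]
      apply (Nat.modEq_and_modEq_iff_modEq_mul cp).mp
      constructor
      · have h1 : m ^ t ≡ 1 [MOD pa] := Nat.ModEq.pow_totient cp.symm
        have h2 : pa ^ s ≡ 0 [MOD pa] := (Nat.modEq_zero_iff_dvd).mpr (dvd_pow_self pa hs.ne')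
        simpa using h1.add h2
      · have h1 : m ^ t ≡ 0 [MOD m] := (Nat.modEq_zero_iff_dvd).mpr (dvd_pow_self m ht.ne')
        have h2 : pa ^ s ≡ 1 [MOD m] := Nat.ModEq.pow_totient cp
        simpa using h1.add h2
    have := (pow_eq_pow_iff_modEq (x := x) (n := m ^ t + pa ^ s) (m := 1)).mpr (by rwa [← hn])
    rw [pow_one] at this
    exact this.symm
  · -- p-part
    have h1 : (x ^ (m ^ t)) ^ pa = 1 := by
      rw [← pow_mul]
      apply orderOf_dvd_iff_pow_eq_one.mp
      rw [← hn, ← hmul]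
      have : m ∣ m ^ t := dvd_pow_self m ht.ne'
      calc pa * m ∣ pa * m ^ t := mul_dvd_mul_left pa this
        _ = m ^ t * pa := mul_comm _ _
    have h2 : orderOf (x ^ (m ^ t)) ∣ pa := orderOf_dvd_of_pow_eq_one h1
    obtain ⟨k, _, hk⟩ := (Nat.dvd_prime_pow hp).mp h2
    exact ⟨k, hk⟩
  · -- p'-part
    have h1 : (x ^ (pa ^ s)) ^ m = 1 := by
      rw [← pow_mul]
      apply orderOf_dvd_iff_pow_eq_one.mp
      rw [← hn, ← hmul]
      exact mul_dvd_mul_right (dvd_pow_self pa hs.ne') m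
    have h2 : orderOf (x ^ (pa ^ s)) ∣ m := orderOf_dvd_of_pow_eq_one h1
    exact fun hdvd => hpm (hdvd.trans h2)

section Main

variable [Finite G] {p : ℕ}

theorem hyper_le_fitting : hypercenter G ≤ fitting G :=
  le_sSup ⟨hypercenter_normal G, isNilpotent_hypercenter⟩

theorem mem_fitting_of_not_dvd (hp : p.Prime) (hi : (fitting G).index = p)
    {v : G} (hv : ¬ p ∣ orderOf v) : v ∈ fitting G := by
  haveI hFn : (fitting G).Normal := (fitting_spec).1
  have h1 : orderOf ((QuotientGroup.mk' (fitting G)) v) ∣ orderOf v := orderOf_map_dvd _ v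
  have h2 : orderOf ((QuotientGroup.mk' (fitting G)) v) ∣ p := by
    rw [← hi, Subgroup.index_eq_card]
    exact orderOf_dvd_natCard _
  have h3 : orderOf ((QuotientGroup.mk' (fitting G)) v) = 1 := by
    rcases (Nat.Prime.eq_one_or_self_of_dvd hp _ h2) with h | h
    · exact h
    · exact absurd (h ▸ h1) hv
  exact (QuotientGroup.eq_one_iff v).mp (orderOf_eq_one_iff.mp h3)

theorem exists_clique_elt (hnn : ¬ Group.IsNilpotent G) (hp : p.Prime)
    (hi : (fitting G).index = p) : ∃ c, c ∈ fitting G ∧ c ∉ hypercenter G := by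
  by_contra hno
  push_neg at hno
  have hFZ : fitting G ≤ hypercenter G := hno
  have hidx : (hypercenter G).index ∣ p := hi ▸ Subgroup.index_dvd_of_le hFZ
  haveI := Fact.mk hp
  have hne : (hypercenter G).index ≠ 1 := by
    intro h1
    apply hnn
    refine ⟨Nat.card G, ?_⟩
    have := Subgroup.index_eq_one.mp h1
    exact this
  have hidxp : (hypercenter G).index = p := by
    rcases (Nat.Prime.eq_one_or_self_of_dvd hp _ hidx) with h | h
    · exact absurd h hne
    · exact h
  -- G / Z has order p, hence is commutative; so all commutators lie in Z
  have hcard : Nat.card (G ⧸ hypercenter G) = p := by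
    rw [← Subgroup.index_eq_card]; exact hidxp
  haveI : IsCyclic (G ⧸ hypercenter G) := isCyclic_of_prime_card hcard
  letI : CommGroup (G ⧸ hypercenter G) := IsCyclic.commGroup
  have hcomm : ∀ x y : G, x * y * x⁻¹ * y⁻¹ ∈ hypercenter G := by
    intro x y
    rw [← QuotientGroup.eq_one_iff]
    simp only [QuotientGroup.mk_mul, QuotientGroup.mk_inv]
    rw [mul_comm ((x : G ⧸ hypercenter G)) (y : G ⧸ hypercenter G)]
    group
  have htop : Subgroup.upperCentralSeries G (Nat.card G + 1) = ⊤ := by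
    rw [eq_top_iff]
    intro x _
    rw [Subgroup.mem_upperCentralSeries_succ_iff]
    intro y
    exact hcomm x y
  rw [hypercenter_succ] at htop
  exact hnn ⟨Nat.card G, htop⟩

theorem adj_of_subgroup {a b : {x : G // x ∉ hypercenter G}} (hne : a.1 ≠ b.1)
    (K : Subgroup G) (hK : Group.IsNilpotent ↥K) (ha : a.1 ∈ K) (hb : b.1 ∈ K) :
    (nilGraph G).Adj a b := by
  refine And.intro (fun h => hne (congrArg Subtype.val h)) ?_
  apply nilpotent_of_le _ hK
  rw [Subgroup.closure_le]
  rintro x (rfl | rfl) <;> assumption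

end Main

section Endgame

variable [Finite G]

/-- A vertex is bad if it is outside the Fitting subgroup and has no neighbour inside it. -/
def IsBadVtx (x : {x : G // x ∉ hypercenter G}) : Prop :=
  x.1 ∉ fitting G ∧ ∀ y, (nilGraph G).Adj x y → y.1 ∉ fitting G

theorem bad_step {p : ℕ} (hp : p.Prime) (hi : (fitting G).index = p)
    {x y : {x : G // x ∉ hypercenter G}} (hx : IsBadVtx x) (hxy : (nilGraph G).Adj x y) :
    IsBadVtx y := by
  obtain ⟨hFn, hFnil⟩ := (fitting_spec (G := G))
  haveI := hFn
  haveI := Fact.mk hp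
  have hyF : y.1 ∉ fitting G := hx.2 y hxy
  refine ⟨hyF, ?_⟩
  intro w hyw hwF
  -- we derive a contradiction from w.1 ∈ fitting G
  set N := Subgroup.closure ({x.1, y.1} : Set G) with hNdef
  have hNnil : Group.IsNilpotent ↥N := And.right hxy
  have hxN : x.1 ∈ N := Subgroup.subset_closure (Or.inl rfl)
  have hyN : y.1 ∈ N := Subgroup.subset_closure (Or.inr rfl)
  have hp'Z : ∀ s, s ∈ N → ¬ p ∣ orderOf s → s ∈ hypercenter G := by
    intro s hsN hs
    by_contra hsZ
    have hsF : s ∈ fitting G := mem_fitting_of_not_dvd hp hi hs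
    have hadj : (nilGraph G).Adj x ⟨s, hsZ⟩ :=
      adj_of_subgroup (fun he => hx.1 (he ▸ hsF)) N hNnil hxN hsN
    exact hx.2 ⟨s, hsZ⟩ hadj hsF
  obtain ⟨ux, vx, hux_mem, hvx_mem, hx_eq, hux_ord, hvx_ord⟩ := exists_p_decomp p hp x.1
  obtain ⟨uy, vy, huy_mem, hvy_mem, hy_eq, huy_ord, hvy_ord⟩ := exists_p_decomp p hp y.1
  have hxzN : Subgroup.zpowers x.1 ≤ N := Subgroup.zpowers_le.mpr hxN
  have hyzN : Subgroup.zpowers y.1 ≤ N := Subgroup.zpowers_le.mpr hyN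
  have hvxZ : vx ∈ hypercenter G := hp'Z vx (hxzN hvx_mem) hvx_ord
  have hvyZ : vy ∈ hypercenter G := hp'Z vy (hyzN hvy_mem) hvy_ord
  have huxF : ux ∉ fitting G := fun h => hx.1 (hx_eq ▸ mul_mem h (hyper_le_fitting hvxZ))
  have huyF : uy ∉ fitting G := fun h => hyF (hy_eq ▸ mul_mem h (hyper_le_fitting hvyZ))
  have huxN : ux ∈ N := hxzN hux_mem
  have huyN : uy ∈ N := hyzN huy_mem
  by_cases hA : ∃ t, t ∈ fitting G ∧ (∃ k, orderOf t = p ^ k) ∧ t ∉ hypercenter G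
  · -- Case A : there is a p-element in F \ Z
    obtain ⟨t, htF, htord, htZ⟩ := hA
    have htT : t ∈ pPart p (fitting G) := mem_pPart_of_pElt p htF htord
    obtain ⟨k0, hk0⟩ := hux_ord
    have hux_pg : IsPGroup p ↥(Subgroup.zpowers ux) :=
      IsPGroup.of_card (by rw [Nat.card_zpowers, hk0])
    obtain ⟨P, hP⟩ := hux_pg.exists_le_sylow
    haveI hTn : (pPart p (fitting G)).Normal := pPart_normal p _ hFn
    have hTp : IsPGroup p ↥(pPart p (fitting G)) := pPart_isPGroup p hFnil
    have hsup : IsPGroup p ↥((P : Subgroup G) ⊔ pPart p (fitting G)) :=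
      IsPGroup.to_sup_of_normal_right P.isPGroup' hTp
    have hPT : (P : Subgroup G) ⊔ pPart p (fitting G) = P := P.3 hsup le_sup_left
    have htP : t ∈ (P : Subgroup G) := by
      rw [← hPT]; exact Subgroup.mem_sup_right htT
    have huxP : ux ∈ (P : Subgroup G) := hP (Subgroup.mem_zpowers ux)
    have hKnil : Group.IsNilpotent ↥(Subgroup.closure ({ux, t} : Set G)) := by
      refine nilpotent_of_le ?_ (IsPGroup.isNilpotent P.isPGroup')
      rw [Subgroup.closure_le]
      rintro z (rfl | rfl) <;> assumption
    have hKK := isNilpotent_sup_hypercenter _ hKnil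
    have hxKK : x.1 ∈ Subgroup.closure ({ux, t} : Set G) ⊔ hypercenter G := by
      rw [hx_eq]
      exact mul_mem (Subgroup.mem_sup_left (Subgroup.subset_closure (Or.inl rfl))) (Subgroup.mem_sup_right hvxZ)
    have htKK : t ∈ Subgroup.closure ({ux, t} : Set G) ⊔ hypercenter G :=
      Subgroup.mem_sup_left (Subgroup.subset_closure (Or.inr rfl))
    have hadj : (nilGraph G).Adj x ⟨t, htZ⟩ :=
      adj_of_subgroup (fun he => hx.1 (he ▸ htF)) _ hKK hxKK htKK
    exact hx.2 _ hadj htF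
  · -- Case B : every p-element of F is in Z
    push_neg at hA
    set M := Subgroup.closure ({y.1, w.1} : Set G) with hMdef
    have hMnil : Group.IsNilpotent ↥M := And.right hyw
    have hyM : y.1 ∈ M := Subgroup.subset_closure (Or.inl rfl)
    have hwM : w.1 ∈ M := Subgroup.subset_closure (Or.inr rfl)
    obtain ⟨wp, ws, hwp_mem, hws_mem, hw_eq, hwp_ord, hws_ord⟩ := exists_p_decomp p hp w.1
    have hwzF : Subgroup.zpowers w.1 ≤ fitting G := Subgroup.zpowers_le.mpr hwF
    have hwpF : wp ∈ fitting G := hwzF hwp_mem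
    have hwsF : ws ∈ fitting G := hwzF hws_mem
    have hwpZ : wp ∈ hypercenter G := hA wp hwpF hwp_ord
    have hwsZ : ws ∉ hypercenter G := fun h => w.2 (hw_eq ▸ mul_mem hwpZ h)
    have huyM : uy ∈ M := (Subgroup.zpowers_le.mpr hyM) huy_mem
    have hwsM : ws ∈ M := (Subgroup.zpowers_le.mpr hwM) hws_mem
    have hcomm : Commute uy ws := by
      haveI : Fintype ↥M := Fintype.ofFinite _
      obtain ⟨k1, hk1⟩ := huy_ord
      have hco : Nat.Coprime (orderOf (⟨uy, huyM⟩ : ↥M)) (orderOf (⟨ws, hwsM⟩ : ↥M)) := by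
        rw [← orderOf_subtype (⟨uy, huyM⟩ : ↥M), ← orderOf_subtype (⟨ws, hwsM⟩ : ↥M)]
        show Nat.Coprime (orderOf uy) (orderOf ws)
        rw [hk1]
        exact Nat.Coprime.pow_left k1 ((Nat.Prime.coprime_iff_not_dvd hp).mpr hws_ord)
      have h := commute_of_coprime_orderOf ↥M hMnil hco
      have h2 := Subtype.ext_iff.mp h
      push_cast at h2
      exact h2
    -- common Sylow subgroup containing ux and uy
    obtain ⟨Q⟩ := (Sylow.nonempty : Nonempty (Sylow p ↥N))
    have hux_in : (⟨ux, huxN⟩ : ↥N) ∈ Q := by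
      apply mem_sylow_of_nilpotent hNnil
      obtain ⟨k1, hk1⟩ := hux_ord
      exact ⟨k1, by rw [← orderOf_subtype (⟨ux, huxN⟩ : ↥N)]; exact hk1⟩
    have huy_in : (⟨uy, huyN⟩ : ↥N) ∈ Q := by
      apply mem_sylow_of_nilpotent hNnil
      obtain ⟨k1, hk1⟩ := huy_ord
      exact ⟨k1, by rw [← orderOf_subtype (⟨uy, huyN⟩ : ↥N)]; exact hk1⟩
    have hW : Subgroup.closure ({ux, uy} : Set G) ≤ (↑Q : Subgroup ↥N).map N.subtype := by
      rw [Subgroup.closure_le]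
      rintro z (rfl | rfl)
      · exact ⟨⟨z, huxN⟩, hux_in, rfl⟩
      · exact ⟨⟨z, huyN⟩, huy_in, rfl⟩
    have hWp : IsPGroup p ↥(Subgroup.closure ({ux, uy} : Set G)) :=
      (Q.isPGroup'.of_equiv (Subgroup.equivMapOfInjective _ _ (Subgroup.subtype_injective N))).to_le hW
    obtain ⟨P, hPW⟩ := hWp.exists_le_sylow
    have huxP : ux ∈ (P : Subgroup G) := hPW (Subgroup.subset_closure (Or.inl rfl))
    have huyP : uy ∈ (P : Subgroup G) := hPW (Subgroup.subset_closure (Or.inr rfl))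
    set PP := (P : Subgroup G) with hPPdef
    set A := (fitting G).subgroupOf PP with hAdef
    haveI hAn : A.Normal := Subgroup.normal_subgroupOf
    have hrel_dvd : (fitting G).relIndex PP ∣ p := by
      rw [← hi]; exact Subgroup.relIndex_dvd_index_of_normal _ _
    have hrel_ne : (fitting G).relIndex PP ≠ 1 := by
      intro h
      exact huxF (Subgroup.relIndex_eq_one.mp h huxP)
    have hrelp : (fitting G).relIndex PP = p :=
      ((hp.eq_one_or_self_of_dvd _ hrel_dvd).resolve_left hrel_ne)
    have hcardQ : Nat.card (↥PP ⧸ A) = p := by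
      rw [← Subgroup.index_eq_card]
      exact hrelp
    have hq_ne : (QuotientGroup.mk' A) ⟨uy, huyP⟩ ≠ 1 := by
      intro h
      exact huyF (Subgroup.mem_subgroupOf.mp ((QuotientGroup.eq_one_iff _).mp h))
    have hord_dvd : orderOf ((QuotientGroup.mk' A) ⟨uy, huyP⟩) ∣ p := by
      rw [← hcardQ]; exact orderOf_dvd_natCard _
    have hord_q : orderOf ((QuotientGroup.mk' A) ⟨uy, huyP⟩) = p := by
      refine (hp.eq_one_or_self_of_dvd _ hord_dvd).resolve_left ?_
      intro h
      exact hq_ne (orderOf_eq_one_iff.mp h)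
    have htop : Subgroup.zpowers ((QuotientGroup.mk' A) ⟨uy, huyP⟩) = ⊤ := by
      apply Subgroup.eq_top_of_card_eq
      rw [Nat.card_zpowers, hord_q, hcardQ]
    have hmem : (QuotientGroup.mk' A) ⟨ux, huxP⟩ ∈
        Subgroup.zpowers ((QuotientGroup.mk' A) ⟨uy, huyP⟩) := by
      rw [htop]; trivial
    obtain ⟨k, hk⟩ := Subgroup.mem_zpowers_iff.mp hmem
    have he : ((⟨uy, huyP⟩ : ↥PP) ^ k)⁻¹ * ⟨ux, huxP⟩ ∈ A := by
      apply (QuotientGroup.eq_one_iff _).mp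
      show (QuotientGroup.mk' A) (((⟨uy, huyP⟩ : ↥PP) ^ k)⁻¹ * ⟨ux, huxP⟩) = 1
      rw [map_mul, map_inv, map_zpow, hk]
      group
    have heF : ((((⟨uy, huyP⟩ : ↥PP) ^ k)⁻¹ * ⟨ux, huxP⟩ : ↥PP) : G) ∈ fitting G :=
      Subgroup.mem_subgroupOf.mp he
    have hePP : ((((⟨uy, huyP⟩ : ↥PP) ^ k)⁻¹ * ⟨ux, huxP⟩ : ↥PP) : G) ∈ PP :=
      ((((⟨uy, huyP⟩ : ↥PP) ^ k)⁻¹ * ⟨ux, huxP⟩ : ↥PP)).2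
    have heord := orderOf_eq_pow_of_pGroup hp P.isPGroup' hePP
    have heZ : ((((⟨uy, huyP⟩ : ↥PP) ^ k)⁻¹ * ⟨ux, huxP⟩ : ↥PP) : G) ∈ hypercenter G :=
      hA _ heF heord
    have hux_eq : ux = uy ^ k * ((((⟨uy, huyP⟩ : ↥PP) ^ k)⁻¹ * ⟨ux, huxP⟩ : ↥PP) : G) := by
      push_cast
      group
    have hKnil := isNilpotent_closure_pair hcomm
    have hKK := isNilpotent_sup_hypercenter _ hKnil
    set KK := Subgroup.closure ({uy, ws} : Set G) ⊔ hypercenter G with hKKdef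
    have hxKK : x.1 ∈ KK := by
      rw [hx_eq, hux_eq]
      have huyK : uy ∈ Subgroup.closure ({uy, ws} : Set G) := Subgroup.subset_closure (Or.inl rfl)
      refine mul_mem (mul_mem ?_ ?_) ?_
      · exact Subgroup.mem_sup_left (zpow_mem huyK k)
      · exact Subgroup.mem_sup_right heZ
      · exact Subgroup.mem_sup_right hvxZ
    have hsKK : ws ∈ KK := Subgroup.mem_sup_left (Subgroup.subset_closure (Or.inr rfl))
    have hadj : (nilGraph G).Adj x ⟨ws, hwsZ⟩ :=
      adj_of_subgroup (fun he2 => hx.1 (he2 ▸ hwsF)) _ hKK hxKK hsKK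
    exact hx.2 _ hadj hwsF

end Endgame

theorem no_bad [Finite G] {p : ℕ} (hnn : ¬ Group.IsNilpotent G) (hp : p.Prime)
    (hi : (fitting G).index = p) (hc : (nilGraph G).Connected) :
    ∀ x : {x : G // x ∉ hypercenter G}, ¬ IsBadVtx x := by
  intro x hbad
  obtain ⟨c, hcF, hcZ⟩ := exists_clique_elt hnn hp hi
  obtain ⟨wlk⟩ := hc.preconnected x ⟨c, hcZ⟩
  have key : ∀ (a b : {x : G // x ∉ hypercenter G}) (w : (nilGraph G).Walk a b),
      IsBadVtx a → IsBadVtx b := by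
    intro a b w
    induction w with
    | nil => exact id
    | cons h q ih => exact fun hba => ih (bad_step hp hi hba h)
  exact (key _ _ wlk hbad).1 hcF


end AuxProof

/-- If the Fitting subgroup has prime index and Γ(G) is connected, diam ≤ 3. -/
theorem stmt_17 (G : Type*) [Group G] [Finite G] (hnn : ¬ Group.IsNilpotent G)
    (p : ℕ) (hp : p.Prime) (hi : (fitting G).index = p)
    (hc : (nilGraph G).Connected) :
    (nilGraph G).diam ≤ 3 := by
  have hnear : ∀ x : {x : G // x ∉ hypercenter G},
      ∃ c, c.1 ∈ fitting G ∧ (x = c ∨ (nilGraph G).Adj x c) := by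
    intro x
    by_cases hxF : x.1 ∈ fitting G
    · exact ⟨x, hxF, Or.inl rfl⟩
    · have hnb := no_bad hnn hp hi hc x
      have h2 : ¬ ∀ y, (nilGraph G).Adj x y → y.1 ∉ fitting G :=
        fun hall => hnb ⟨hxF, hall⟩
      push_neg at h2
      obtain ⟨y, hadj, hyF⟩ := h2
      exact ⟨y, hyF, Or.inr hadj⟩
  have edist_le_one : ∀ {a b : {x : G // x ∉ hypercenter G}},
      a = b ∨ (nilGraph G).Adj a b → (nilGraph G).edist a b ≤ 1 := by
    rintro a b (rfl | h)
    · simp [SimpleGraph.edist_self]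
    · have := h.toWalk.edist_le
      simpa using this
  have hdist : ∀ u v : {x : G // x ∉ hypercenter G}, (nilGraph G).edist u v ≤ 3 := by
    intro u v
    obtain ⟨cu, hcuF, hu⟩ := hnear u
    obtain ⟨cv, hcvF, hv⟩ := hnear v
    have h1 : (nilGraph G).edist u cu ≤ 1 := edist_le_one hu
    have h3 : (nilGraph G).edist cv v ≤ 1 := by
      rw [SimpleGraph.edist_comm]
      exact edist_le_one hv
    have h2 : (nilGraph G).edist cu cv ≤ 1 := by
      by_cases hcc : cu = cv
      · exact edist_le_one (Or.inl hcc)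
      · refine edist_le_one (Or.inr ?_)
        exact adj_of_subgroup (fun hval => hcc (Subtype.ext hval)) (fitting G)
          (fitting_spec).2 hcuF hcvF
    calc (nilGraph G).edist u v ≤ (nilGraph G).edist u cu + (nilGraph G).edist cu v :=
          SimpleGraph.edist_triangle
      _ ≤ (nilGraph G).edist u cu + ((nilGraph G).edist cu cv + (nilGraph G).edist cv v) :=
          add_le_add_right SimpleGraph.edist_triangle _
      _ ≤ 1 + (1 + 1) := add_le_add h1 (add_le_add h2 h3)
      _ = 3 := by norm_num
  have hediam : (nilGraph G).ediam ≤ 3 := SimpleGraph.ediam_le_of_edist_le hdist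
  have : (nilGraph G).diam = (nilGraph G).ediam.toNat := rfl
  rw [this]
  have h4 : ((nilGraph G).ediam).toNat ≤ (3 : ℕ∞).toNat :=
    ENat.toNat_le_toNat hediam (by simp)
  simpa using h4
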